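/- Let γ ∈ (0,2), Q = γ/2 + 2/γ, and let α₁, α₂, α₃ be real numbers with ᾱ = α₁ + α₂ + α₃. Set (corresponding to the degenerate weight α₀ = −γ/2): a = (−γ/4)(Q + γ − ᾱ) − 1/2, b = (−γ/4)(Q − α₁ − α₂ + α₃) + 1/2, c = 1 − (γ/2)(Q − α₁), and A = − Γ(c)² Γ(1−a) Γ(1−b) Γ(a−c+1) Γ(b−c+1) / ( Γ(2−c)² Γ(c−a) Γ(c−b) Γ(a) Γ(b) ). Assume none of the Gamma functions appearing on either side below is evaluated at a nonpositive integer. Then A = l(γα₁/2 − γ²/4) · l((γ/4)(ᾱ − 2α₁ − γ/2)) / ( l(2 + γ²/4 − γα₁/2) · l((γ/4)(ᾱ − γ/2 − 2Q)) · l((γ/4)(ᾱ − 2α₂ − γ/2)) · l((γ/4)(ᾱ − 2α₃ − γ/2)) ). -/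

import Mathlib

/-- The special function `l(x) = Γ(x)/Γ(1-x)`. -/
noncomputable def lr (x : ℝ) : ℝ := Real.Gamma x / Real.Gamma (1 - x)

set_option maxHeartbeats 2000000 in
/-- The hypergeometric connection coefficient `A_γ(-γ/2, α₁, α₂, α₃)`
equals the product of `l`-factors appearing in the first DOZZ shift equation. -/
theorem connection_coefficient_first (γ α₁ α₂ α₃ : ℝ) (hγ : γ ∈ Set.Ioo (0:ℝ) 2)
    (a b c A : ℝ)
    (ha : a = (-γ/4) * ((γ/2 + 2/γ) + γ - (α₁ + α₂ + α₃)) - 1/2)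
    (hb : b = (-γ/4) * ((γ/2 + 2/γ) - α₁ - α₂ + α₃) + 1/2)
    (hc : c = 1 - (γ/2) * ((γ/2 + 2/γ) - α₁))
    (hA : A = -(Real.Gamma c ^ 2 * Real.Gamma (1 - a) * Real.Gamma (1 - b)
          * Real.Gamma (a - c + 1) * Real.Gamma (b - c + 1))
        / (Real.Gamma (2 - c) ^ 2 * Real.Gamma (c - a) * Real.Gamma (c - b)
          * Real.Gamma a * Real.Gamma b))
    (hΓ : ∀ x ∈ ([c, 1 - a, 1 - b, a - c + 1, b - c + 1, 2 - c, c - a, c - b, a, b,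
        γ*α₁/2 - γ^2/4, 1 - (γ*α₁/2 - γ^2/4),
        (γ/4)*((α₁+α₂+α₃) - 2*α₁ - γ/2), 1 - (γ/4)*((α₁+α₂+α₃) - 2*α₁ - γ/2),
        2 + γ^2/4 - γ*α₁/2, 1 - (2 + γ^2/4 - γ*α₁/2),
        (γ/4)*((α₁+α₂+α₃) - γ/2 - 2*(γ/2 + 2/γ)),
        1 - (γ/4)*((α₁+α₂+α₃) - γ/2 - 2*(γ/2 + 2/γ)),
        (γ/4)*((α₁+α₂+α₃) - 2*α₂ - γ/2), 1 - (γ/4)*((α₁+α₂+α₃) - 2*α₂ - γ/2),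
        (γ/4)*((α₁+α₂+α₃) - 2*α₃ - γ/2), 1 - (γ/4)*((α₁+α₂+α₃) - 2*α₃ - γ/2)] : List ℝ),
      ∀ m : ℕ, x ≠ -(m:ℝ)) :
    A = lr (γ*α₁/2 - γ^2/4) * lr ((γ/4)*((α₁+α₂+α₃) - 2*α₁ - γ/2))
        / (lr (2 + γ^2/4 - γ*α₁/2) * lr ((γ/4)*((α₁+α₂+α₃) - γ/2 - 2*(γ/2 + 2/γ)))
          * lr ((γ/4)*((α₁+α₂+α₃) - 2*α₂ - γ/2))
          * lr ((γ/4)*((α₁+α₂+α₃) - 2*α₃ - γ/2))) := by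
  obtain ⟨hγ0', _⟩ := hγ
  have hγ0 : γ ≠ 0 := ne_of_gt hγ0'
  set u : ℝ := γ*α₁/2 - γ^2/4 with hu
  set x0 : ℝ := (γ/4)*((α₁+α₂+α₃) - γ/2 - 2*(γ/2 + 2/γ)) with hx0
  set x1 : ℝ := (γ/4)*((α₁+α₂+α₃) - 2*α₁ - γ/2) with hx1
  set x2 : ℝ := (γ/4)*((α₁+α₂+α₃) - 2*α₂ - γ/2) with hx2
  set x3 : ℝ := (γ/4)*((α₁+α₂+α₃) - 2*α₃ - γ/2) with hx3
  have eqc : c = u := by rw [hc, hu]; field_simp; ring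
  have eqa : a = x0 := by rw [ha, hx0]; field_simp; ring
  have eqb : b = x3 := by rw [hb, hx3]; field_simp; ring
  have e1 : a - c + 1 = x1 := by rw [eqa, eqc, hx0, hx1, hu]; field_simp; ring
  have e2 : b - c + 1 = 1 - x2 := by
    rw [eqb, eqc, hx3, hx2, hu]; field_simp; ring
  have e3 : c - a = 1 - x1 := by rw [eqa, eqc, hx0, hx1, hu]; field_simp; ring
  have e4 : c - b = x2 := by rw [eqb, eqc, hx3, hx2, hu]; field_simp; ring
  have e5 : (2:ℝ) + γ^2/4 - γ*α₁/2 = 2 - u := by rw [hu]; ring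
  have e6 : (1:ℝ) - (2 + γ^2/4 - γ*α₁/2) = u - 1 := by rw [hu]; ring
  -- Gamma nonvanishing facts
  have G : ∀ x : ℝ, (∀ m : ℕ, x ≠ -(m:ℝ)) → Real.Gamma x ≠ 0 := fun x hx =>
    Real.Gamma_ne_zero hx
  have hGu : Real.Gamma u ≠ 0 := G u (hΓ u (by simp))
  have hG1u : Real.Gamma (1 - u) ≠ 0 := G _ (hΓ (1 - u) (by simp [hu]))
  have hG2u : Real.Gamma (2 - u) ≠ 0 := by
    have := G _ (hΓ (2 - c) (by simp)); rwa [eqc] at this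
  have hGum1 : Real.Gamma (u - 1) ≠ 0 := by
    have := G _ (hΓ (1 - (2 + γ^2/4 - γ*α₁/2)) (by simp)); rwa [e6] at this
  have hGx0 : Real.Gamma x0 ≠ 0 := G _ (hΓ x0 (by simp [hx0]))
  have hG1x0 : Real.Gamma (1 - x0) ≠ 0 := G _ (hΓ (1 - x0) (by simp [hx0]))
  have hGx1 : Real.Gamma x1 ≠ 0 := G _ (hΓ x1 (by simp [hx1]))
  have hG1x1 : Real.Gamma (1 - x1) ≠ 0 := G _ (hΓ (1 - x1) (by simp [hx1]))
  have hGx2 : Real.Gamma x2 ≠ 0 := G _ (hΓ x2 (by simp [hx2]))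
  have hG1x2 : Real.Gamma (1 - x2) ≠ 0 := G _ (hΓ (1 - x2) (by simp [hx2]))
  have hGx3 : Real.Gamma x3 ≠ 0 := G _ (hΓ x3 (by simp [hx3]))
  have hG1x3 : Real.Gamma (1 - x3) ≠ 0 := G _ (hΓ (1 - x3) (by simp [hx3]))
  -- functional equations
  have hu1 : u - 1 ≠ 0 := by
    have := hΓ (1 - (2 + γ^2/4 - γ*α₁/2)) (by simp) 0
    rw [e6] at this; simpa using this
  have h1u : (1:ℝ) - u ≠ 0 := by
    have := hΓ (1 - (γ*α₁/2 - γ^2/4)) (by simp [hu]) 0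
    simpa [hu] using this
  have g1 : Real.Gamma (2 - u) = (1 - u) * Real.Gamma (1 - u) := by
    have := Real.Gamma_add_one h1u
    rw [show (1:ℝ) - u + 1 = 2 - u by ring] at this
    exact this
  have g2 : Real.Gamma u = (u - 1) * Real.Gamma (u - 1) := by
    have := Real.Gamma_add_one hu1
    rw [show u - 1 + 1 = u by ring] at this
    exact this
  rw [hA, e1, e2, e3, e4, eqa, eqb, eqc]
  simp only [lr, e5, e6]
  rw [g1, g2]
  field_simp
  ring_nf
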